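/- Let p be an odd prime, and let r, t be non-negative integers with r ≥ t, r - t even, and t_0 = p - 1 (where n_i denotes the i-th base-p digit of n). If (N, σ, δ, I) is an admissible quadruple for the pair (r, t) with N ≥ 1, then σ_0 = 0, 0 ∉ I, and 2δ_0 ≡ r + 1 (mod p); explicitly, δ_0 = 0 if r_0 = p - 1, δ_0 = (r_0 + 1)/2 if r_0 is odd, and δ_0 = (p + 1 + r_0)/2 if r_0 is even with r_0 ≠ p - 1. -/
import Mathlib

/-- The `i`-th digit of the base-`p` expansion of `n`. -/
def digit (p n i : ℕ) : ℕ := n / p ^ i % p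

/-- `σ_I = ∑_{i ∈ I} p^i σ_i`. -/
def digitSum (p σ : ℕ) (I : Finset ℕ) : ℕ := ∑ i ∈ I, p ^ i * digit p σ i

/-- An admissible triple `(N, σ, δ)`. -/
def AdmissibleTriple (p N σ δ : ℕ) : Prop :=
  σ < p ^ (N + 1) - p ^ N ∧ δ < p ^ (N + 1) - p ^ N ∧
  (∀ i < N, digit p σ i + digit p δ i ≤ p - 1) ∧
  digit p σ N + digit p δ N < p - 1

/-- An admissible quadruple `(N, σ, δ, I)`. -/
def AdmissibleQuadruple (p N σ δ : ℕ) (I : Finset ℕ) : Prop :=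
  AdmissibleTriple p N σ δ ∧ ∀ i ∈ I, digit p σ i ≠ 0 ∧ i ≠ N

/-- An admissible quadruple for the pair `(r, t)`. -/
def AdmissibleQuadrupleFor (p r t N σ δ : ℕ) (I : Finset ℕ) : Prop :=
  AdmissibleQuadruple p N σ δ I ∧
  t + 2 * digitSum p σ I = p ^ N - 1 + σ ∧
  r ≡ p ^ N - 1 + σ + 2 * δ [MOD 2 * p ^ (N + 1)]

lemma key_aux (p d0 r0 : ℕ) (hp2 : 2 ≤ p) (hpodd : p % 2 = 1) (hd : d0 < p) (hr : r0 < p)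
    (hmod : 2 * d0 ≡ r0 + 1 [MOD p]) :
    (r0 = p - 1 → d0 = 0) ∧ (r0 % 2 = 1 → 2 * d0 = r0 + 1) ∧
    (r0 % 2 = 0 → r0 ≠ p - 1 → 2 * d0 = p + 1 + r0) := by
  have h1 : r0 + 1 ≡ 2 * d0 + p [MOD p] :=
    hmod.symm.trans ((Nat.modEq_iff_dvd' (Nat.le_add_right _ _)).mpr (by simp))
  have h2 : p ∣ 2 * d0 + p - (r0 + 1) := (Nat.modEq_iff_dvd' (by omega)).mp h1
  obtain ⟨c, hc⟩ := h2
  have h3 : p * c < p * 3 := by rw [← hc]; omega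
  have hc3 : c < 3 := lt_of_mul_lt_mul_left h3 (by omega)
  interval_cases c <;> omega

theorem stmt_12 (p : ℕ) (hp : p.Prime) (hodd : Odd p) (r t : ℕ) (hrt : t ≤ r)
    (hev : Even (r - t)) (ht0 : digit p t 0 = p - 1)
    (N σ δ : ℕ) (I : Finset ℕ)
    (h : AdmissibleQuadrupleFor p r t N σ δ I) (hN : 1 ≤ N) :
    digit p σ 0 = 0 ∧ 0 ∉ I ∧ 2 * digit p δ 0 ≡ r + 1 [MOD p] ∧
    (digit p r 0 = p - 1 → digit p δ 0 = 0) ∧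
    (Odd (digit p r 0) → 2 * digit p δ 0 = digit p r 0 + 1) ∧
    (Even (digit p r 0) → digit p r 0 ≠ p - 1 →
      2 * digit p δ 0 = p + 1 + digit p r 0) := by
  obtain ⟨⟨⟨hσlt, hδlt, hdig, hdigN⟩, hI⟩, ht, hr⟩ := h
  haveI : Fact p.Prime := ⟨hp⟩
  haveI : NeZero p := ⟨hp.ne_zero⟩
  have hp2 : 2 ≤ p := hp.two_le
  have hd0 : ∀ n, digit p n 0 = n % p := by intro n; simp [digit]
  have hpcast : ((p : ℕ) : ZMod p) = 0 := ZMod.natCast_self p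
  have hpN : ((p ^ N : ℕ) : ZMod p) = 0 := by
    push_cast; rw [hpcast]; exact zero_pow (by omega)
  have hsub : ((p ^ N - 1 : ℕ) : ZMod p) = -1 := by
    rw [Nat.cast_sub (Nat.one_le_pow _ _ hp.pos), hpN]; push_cast; ring
  -- digitSum mod p
  have hS : ((digitSum p σ I : ℕ) : ZMod p)
      = if 0 ∈ I then ((digit p σ 0 : ℕ) : ZMod p) else 0 := by
    unfold digitSum
    push_cast
    rw [Finset.sum_congr rfl (fun i _ => ?_), Finset.sum_ite_eq' I 0
      (fun _ => ((digit p σ 0 : ℕ) : ZMod p))]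
    by_cases hi : i = 0
    · simp [hi]
    · rw [hpcast, zero_pow hi, if_neg hi, zero_mul]
  have htc : ((t : ℕ) : ZMod p) = -1 := by
    have : ((t % p : ℕ) : ZMod p) = ((p - 1 : ℕ) : ZMod p) := by rw [← hd0 t, ht0]
    rw [← ZMod.natCast_mod, this, Nat.cast_sub hp.one_le, hpcast]; push_cast; ring
  have hσc : ((σ : ℕ) : ZMod p) = ((digit p σ 0 : ℕ) : ZMod p) := by
    rw [hd0, ZMod.natCast_mod]
  have hδc : ((δ : ℕ) : ZMod p) = ((digit p δ 0 : ℕ) : ZMod p) := by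
    rw [hd0, ZMod.natCast_mod]
  have hteq : ((t + 2 * digitSum p σ I : ℕ) : ZMod p) = ((p ^ N - 1 + σ : ℕ) : ZMod p) := by
    rw [ht]
  rw [Nat.cast_add, Nat.cast_add, hsub, Nat.cast_mul, htc, hS, hσc] at hteq
  -- σ₀ = 0 and 0 ∉ I
  have hzero : ∀ a : ℕ, a < p → ((a : ℕ) : ZMod p) = 0 → a = 0 := by
    intro a ha h0
    exact Nat.eq_zero_of_dvd_of_lt ((ZMod.natCast_eq_zero_iff a p).mp h0) ha
  have hσlt0 : digit p σ 0 < p := by rw [hd0]; exact Nat.mod_lt _ hp.pos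
  have h0I : 0 ∉ I := by
    intro h0
    have hiff := (hI 0 h0).1
    rw [if_pos h0] at hteq
    have : ((digit p σ 0 : ℕ) : ZMod p) = 0 := by linear_combination hteq
    exact hiff (hzero _ hσlt0 this)
  rw [if_neg h0I] at hteq
  have hσ0 : digit p σ 0 = 0 := by
    apply hzero _ hσlt0
    linear_combination -hteq
  -- δ congruence
  have hrp : r ≡ p ^ N - 1 + σ + 2 * δ [MOD p] :=
    hr.of_dvd ⟨2 * p ^ N, by ring⟩
  have hrc : ((r : ℕ) : ZMod p) = ((p ^ N - 1 + σ + 2 * δ : ℕ) : ZMod p) :=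
    (ZMod.natCast_eq_natCast_iff _ _ _).mpr hrp
  rw [Nat.cast_add, Nat.cast_add, hsub, Nat.cast_mul, hσc, hδc, hσ0] at hrc
  push_cast at hrc
  have h2δ : (((2 * digit p δ 0 : ℕ)) : ZMod p) = ((r + 1 : ℕ) : ZMod p) := by
    push_cast
    linear_combination -hrc
  have hmodp : 2 * digit p δ 0 ≡ r + 1 [MOD p] := (ZMod.natCast_eq_natCast_iff _ _ _).mp h2δ
  -- explicit values
  have hδlt0 : digit p δ 0 < p := by rw [hd0]; exact Nat.mod_lt _ hp.pos
  have hrlt0 : digit p r 0 < p := by rw [hd0]; exact Nat.mod_lt _ hp.pos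
  have hmod' : 2 * digit p δ 0 ≡ digit p r 0 + 1 [MOD p] := by
    rw [hd0 r]
    exact hmodp.trans ((Nat.mod_modEq r p).symm.add_right 1)
  obtain ⟨k1, k2, k3⟩ := key_aux p (digit p δ 0) (digit p r 0) hp2
    (Nat.odd_iff.mp hodd) hδlt0 hrlt0 hmod'
  exact ⟨hσ0, h0I, hmodp, k1, fun ho => k2 (Nat.odd_iff.mp ho),
    fun he => k3 (Nat.even_iff.mp he)⟩
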